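/- Let n ≥ 1, let P be a finite set with maps q : P → {0,…,n} and σ : P → {±1} satisfying the ABBV identities ∑_{p∈P} σ(p)(-1)^{q(p)} e_i(1^{n-q(p)}, (-1)^{q(p)}) = 0 for all 0 ≤ i ≤ n-1. Then the multiset {(q(p), σ(p)) : p ∈ P} is a disjoint union of copies of: the multiset {(j,+1) with multiplicity C(n,j)}_{j=0}^n, its sign reversal, and pairs {(j,+1),(j,−1)}. -/

import Mathlib

open Polynomial Finset

private lemma esymm_eq_coeff (n j i : ℕ) (hj : j ≤ n) (hi : i ≤ n) :
    (Multiset.replicate (n - j) (1 : ℚ) + Multiset.replicate j (-1 : ℚ)).esymm i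
      = ((X + 1) ^ (n - j) * (X - 1) ^ j : ℚ[X]).coeff (n - i) := by
  have hcard : Multiset.card (Multiset.replicate (n - j) (1 : ℚ)
      + Multiset.replicate j (-1 : ℚ)) = n := by
    simp [Nat.sub_add_cancel hj]
  have h := Multiset.prod_X_add_C_coeff
      (Multiset.replicate (n - j) (1 : ℚ) + Multiset.replicate j (-1 : ℚ))
      (k := n - i) (by rw [hcard]; omega)
  rw [hcard, show n - (n - i) = i by omega] at h
  rw [← h]
  congr 1
  simp [Multiset.map_add, Multiset.map_replicate, Multiset.prod_add,
    Multiset.prod_replicate, sub_eq_add_neg]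

private lemma key_lemma (n : ℕ) (d : ℕ → ℤ)
    (h : ∀ i < n, ∑ j ∈ range (n + 1),
      (d j : ℚ) * (-1 : ℚ) ^ j * (((X + 1) ^ (n - j) * (X - 1) ^ j : ℚ[X]).coeff (n - i)) = 0) :
    ∀ j ≤ n, (d j : ℚ) = (d 0 : ℚ) * n.choose j := by
  classical
  have hflip : ∀ j : ℕ, ((1 : ℚ[X]) - X) ^ j = C ((-1 : ℚ) ^ j) * (X - 1) ^ j := by
    intro j
    rw [map_pow, ← mul_pow]
    congr 1
    rw [map_neg, map_one]
    ring
  set A : ℚ[X] := ∑ j ∈ range (n + 1), C (d j : ℚ) * ((X + 1) ^ (n - j) * (1 - X) ^ j) with hA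
  have hAcoeff : ∀ k, A.coeff k = ∑ j ∈ range (n + 1),
      (d j : ℚ) * (-1 : ℚ) ^ j * (((X + 1) ^ (n - j) * (X - 1) ^ j : ℚ[X]).coeff k) := by
    intro k
    rw [hA, finset_sum_coeff]
    refine Finset.sum_congr rfl fun j _ => ?_
    rw [show (X + 1 : ℚ[X]) ^ (n - j) * (1 - X) ^ j
        = C ((-1 : ℚ) ^ j) * ((X + 1) ^ (n - j) * (X - 1) ^ j) by rw [hflip]; ring,
      ← mul_assoc, ← C_mul, coeff_C_mul]
  have hdeg : ∀ j ∈ range (n + 1),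
      ((C (d j : ℚ)) * ((X + 1) ^ (n - j) * (1 - X) ^ j)).natDegree ≤ n := by
    intro j hj
    have hj' : j ≤ n := by simpa [Nat.lt_succ_iff] using mem_range.mp hj
    calc ((C (d j : ℚ)) * ((X + 1) ^ (n - j) * (1 - X) ^ j)).natDegree
        ≤ (C (d j : ℚ)).natDegree + ((X + 1 : ℚ[X]) ^ (n - j) * (1 - X) ^ j).natDegree :=
          natDegree_mul_le
      _ ≤ 0 + (((X + 1 : ℚ[X]) ^ (n - j)).natDegree + ((1 - X : ℚ[X]) ^ j).natDegree) := by
          gcongr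
          · exact le_of_eq (natDegree_C _)
          · exact natDegree_mul_le
      _ ≤ 0 + ((n - j) * 1 + j * 1) := by
          gcongr
          · refine natDegree_pow_le.trans ?_
            gcongr
            have h1 : (X + 1 : ℚ[X]).natDegree = 1 := by
              simpa using natDegree_X_add_C (1 : ℚ)
            omega
          · refine natDegree_pow_le.trans ?_
            gcongr
            have : (1 - X : ℚ[X]) = -(X - 1) := by ring
            rw [this, natDegree_neg]
            have h1 : (X - 1 : ℚ[X]).natDegree = 1 := by
              simpa using natDegree_X_sub_C (1 : ℚ)
            omega
      _ ≤ n := by omega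
  have hzero : ∀ k, 1 ≤ k → A.coeff k = 0 := by
    intro k hk1
    by_cases hk : k ≤ n
    · rw [hAcoeff]
      have := h (n - k) (by omega)
      rwa [show n - (n - k) = k by omega] at this
    · rw [hA, finset_sum_coeff]
      refine Finset.sum_eq_zero fun j hj => ?_
      exact coeff_eq_zero_of_natDegree_lt (lt_of_le_of_lt (hdeg j hj) (by omega))
  have hAC : A = C (A.coeff 0) := by
    ext k
    cases k with
    | zero => simp
    | succ k => rw [coeff_C, if_neg (Nat.succ_ne_zero k), hzero (k + 1) (by omega)]
  set c : ℚ := A.coeff 0 with hc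
  set e : ℚ := c / 2 ^ n with he
  have heval : ∀ t : ℚ, t ≠ 1 →
      ∑ j ∈ range (n + 1), (d j : ℚ) * (-t) ^ j = e * (1 - t) ^ n := by
    intro t ht
    have h1 : (1 : ℚ) - t ≠ 0 := sub_ne_zero.mpr (Ne.symm ht)
    have hx : Polynomial.eval ((1 + t) / (1 - t)) A = c := by
      conv_lhs => rw [hAC]
      rw [eval_C]
    rw [hA] at hx
    simp only [eval_finset_sum, eval_mul, eval_pow, eval_add, eval_sub, eval_one,
      eval_X, eval_C] at hx
    have h2 : (1 + t) / (1 - t) + 1 = 2 / (1 - t) := by field_simp; ring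
    have h3 : 1 - (1 + t) / (1 - t) = (2 / (1 - t)) * (-t) := by field_simp; ring
    rw [Finset.sum_congr rfl (fun j hj => by rw [h2, h3] :
      ∀ j ∈ range (n + 1), (d j : ℚ) * (((1 + t) / (1 - t) + 1) ^ (n - j)
        * (1 - (1 + t) / (1 - t)) ^ j)
      = (d j : ℚ) * ((2 / (1 - t)) ^ (n - j) * ((2 / (1 - t)) * (-t)) ^ j))] at hx
    have h4 : ∀ j ∈ range (n + 1),
        (d j : ℚ) * ((2 / (1 - t)) ^ (n - j) * ((2 / (1 - t)) * (-t)) ^ j)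
          = ((d j : ℚ) * (-t) ^ j) * (2 / (1 - t)) ^ n := by
      intro j hj
      have hj' : j ≤ n := by simpa [Nat.lt_succ_iff] using mem_range.mp hj
      rw [mul_pow, show (2 / (1 - t)) ^ (n - j) * ((2 / (1 - t)) ^ j * (-t) ^ j)
          = ((2 / (1 - t)) ^ (n - j) * (2 / (1 - t)) ^ j) * (-t) ^ j by ring,
        ← pow_add, Nat.sub_add_cancel hj']
      ring
    rw [Finset.sum_congr rfl h4, ← Finset.sum_mul] at hx
    have hw : ((2 : ℚ) / (1 - t)) ^ n ≠ 0 := pow_ne_zero _ (div_ne_zero two_ne_zero h1)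
    have h5 : e * (1 - t) ^ n * ((2 / (1 - t)) ^ n) = c := by
      rw [he, div_pow]
      field_simp
    exact mul_right_cancel₀ hw (hx.trans h5.symm)
  set B : ℚ[X] := ∑ j ∈ range (n + 1), C ((d j : ℚ)) * (-X) ^ j with hB
  set B' : ℚ[X] := C e * (1 - X) ^ n with hB'
  have hBB' : B = B' := by
    apply eq_of_infinite_eval_eq
    apply Set.Infinite.mono (s := {x : ℚ | x ≠ 1})
    · intro t ht
      simp only [Set.mem_setOf_eq] at ht ⊢
      have := heval t ht
      simp only [hB, hB', eval_finset_sum, eval_mul, eval_pow, eval_neg, eval_X,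
        eval_C, eval_sub, eval_one]
      exact this
    · have h1 : ({1} : Set ℚ).Finite := Set.finite_singleton 1
      have := h1.infinite_compl
      exact this
  have hcoeffB : ∀ j, j ≤ n → B.coeff j = (d j : ℚ) * (-1) ^ j := by
    intro j hj
    rw [hB, finset_sum_coeff]
    rw [Finset.sum_eq_single j]
    · rw [show (-X : ℚ[X]) ^ j = C ((-1 : ℚ) ^ j) * X ^ j by
        rw [show (-X : ℚ[X]) = C (-1) * X by simp, mul_pow, ← map_pow],
        ← mul_assoc, ← C_mul, coeff_C_mul, coeff_X_pow, if_pos rfl, mul_one]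
    · intro b _ hbj
      rw [show (-X : ℚ[X]) ^ b = C ((-1 : ℚ) ^ b) * X ^ b by
        rw [show (-X : ℚ[X]) = C (-1) * X by simp, mul_pow, ← map_pow],
        ← mul_assoc, ← C_mul, coeff_C_mul, coeff_X_pow, if_neg (Ne.symm hbj), mul_zero]
    · intro hj'
      exact absurd (mem_range.mpr (by omega)) hj'
  have hcoeffB' : ∀ j, j ≤ n → B'.coeff j = e * ((-1) ^ j * n.choose j) := by
    intro j hj
    rw [hB', coeff_C_mul]
    congr 1
    rw [show ((1 : ℚ[X]) - X) ^ n = (-X + 1) ^ n by ring, add_pow, finset_sum_coeff,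
      Finset.sum_eq_single j]
    · rw [show ((-X : ℚ[X]) ^ j * 1 ^ (n - j) * (n.choose j : ℚ[X]))
          = C ((-1 : ℚ) ^ j * n.choose j) * X ^ j by
        rw [show (-X : ℚ[X]) = C (-1) * X by simp, mul_pow, ← map_pow, ← C_eq_natCast,
          C_mul]
        ring,
        coeff_C_mul, coeff_X_pow, if_pos rfl, mul_one]
    · intro b _ hbj
      rw [show ((-X : ℚ[X]) ^ b * 1 ^ (n - b) * (n.choose b : ℚ[X]))
          = C ((-1 : ℚ) ^ b * n.choose b) * X ^ b by
        rw [show (-X : ℚ[X]) = C (-1) * X by simp, mul_pow, ← map_pow, ← C_eq_natCast,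
          C_mul]
        ring,
        coeff_C_mul, coeff_X_pow, if_neg (Ne.symm hbj), mul_zero]
    · intro hj'
      exact absurd (mem_range.mpr (by omega)) hj'
  have hdj : ∀ j ≤ n, (d j : ℚ) = e * n.choose j := by
    intro j hj
    have h1 : B.coeff j = B'.coeff j := by rw [hBB']
    rw [hcoeffB j hj, hcoeffB' j hj] at h1
    have h2 : ((-1 : ℚ) ^ j) ≠ 0 := pow_ne_zero _ (by norm_num)
    have h1' : (d j : ℚ) * (-1) ^ j = (e * n.choose j) * (-1) ^ j := by rw [h1]; ring
    exact mul_right_cancel₀ h2 h1'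
  intro j hj
  have h0 := hdj 0 (Nat.zero_le n)
  simp only [Nat.choose_zero_right, Nat.cast_one, mul_one] at h0
  rw [hdj j hj, h0]


/-- The multiset of fixed-point data of `(S²)^n`: `C(n,j)` copies of `(j, ε)` for each
`0 ≤ j ≤ n`, where `ε : ℤ` is the common sign. -/
def sphereData (n : ℕ) (ε : ℤ) : Multiset (ℕ × ℤ) :=
  ∑ j ∈ Finset.range (n + 1), Multiset.replicate (n.choose j) (j, ε)

/-- The fixed-point data of a representation sphere `S(V_j ⊕ ℝ)`: the pair
`{(j,+1), (j,−1)}`. -/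
def pairData (j : ℕ) : Multiset (ℕ × ℤ) := {(j, 1), (j, -1)}

/-- Let `n ≥ 1` and let `(q, σ)` be semifree abstract isotropy data on a finite set `P`
satisfying the ABBV identities
`∑_{p∈P} σ(p)(-1)^{q(p)} e_i(1^{n-q(p)}, (-1)^{q(p)}) = 0` for all `0 ≤ i ≤ n-1`. Then
the multiset `{(q(p), σ(p)) : p ∈ P}` is a disjoint union of copies of the data of
`(S²)^n`, its sign reversal, and the pairs `{(j,+1),(j,−1)}`. -/
theorem stmt_12 (n : ℕ) (hn : 1 ≤ n) (P : Type*) [Fintype P]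
    (q : P → ℕ) (hq : ∀ p, q p ≤ n) (σ : P → ℤ) (hσ : ∀ p, σ p = 1 ∨ σ p = -1)
    (habbv : ∀ i < n, ∑ p : P, (σ p : ℚ) * (-1 : ℚ) ^ (q p) *
      (Multiset.replicate (n - q p) (1 : ℚ) + Multiset.replicate (q p) (-1 : ℚ)).esymm i = 0) :
    ∃ (a b : ℕ) (c : ℕ → ℕ),
      (Finset.univ.val.map fun p : P => (q p, σ p)) =
        a • sphereData n 1 + b • sphereData n (-1) +
          ∑ j ∈ Finset.range (n + 1), c j • pairData j := by
  classical
  set Np : ℕ → ℕ := fun j => (univ.filter fun p => q p = j ∧ σ p = 1).card with hNp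
  set Nm : ℕ → ℕ := fun j => (univ.filter fun p => q p = j ∧ σ p = -1).card with hNm
  set d : ℕ → ℤ := fun j => (Np j : ℤ) - Nm j with hd
  -- fiber sums of σ
  have hfiber : ∀ j : ℕ, ∑ p ∈ univ.filter (fun p => q p = j), (σ p : ℚ) = (d j : ℚ) := by
    intro j
    rw [← Finset.sum_filter_add_sum_filter_not (univ.filter (fun p => q p = j))
      (fun p => σ p = 1)]
    rw [Finset.filter_filter, Finset.filter_filter]
    have e1 : ∑ p ∈ univ.filter (fun p => q p = j ∧ σ p = 1), (σ p : ℚ) = Np j := by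
      rw [Finset.sum_congr rfl (fun p hp => by
        rw [(Finset.mem_filter.mp hp).2.2] : ∀ p ∈ univ.filter (fun p => q p = j ∧ σ p = 1),
          (σ p : ℚ) = ((1 : ℤ) : ℚ))]
      simp [hNp]
    have hfe : univ.filter (fun p => q p = j ∧ ¬ σ p = 1)
        = univ.filter (fun p => q p = j ∧ σ p = -1) := by
      apply Finset.filter_congr
      intro p _
      rcases hσ p with h | h <;> simp [h]
    have e2 : ∑ p ∈ univ.filter (fun p => q p = j ∧ ¬ σ p = 1), (σ p : ℚ) = -(Nm j) := by
      rw [hfe]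
      rw [Finset.sum_congr rfl (fun p hp => by
        rw [(Finset.mem_filter.mp hp).2.2] : ∀ p ∈ univ.filter (fun p => q p = j ∧ σ p = -1),
          (σ p : ℚ) = ((-1 : ℤ) : ℚ))]
      simp [hNm, hNp]
    rw [e1, e2, hd]
    push_cast
    ring
  -- ABBV in fiberwise form
  have habbv' : ∀ i < n, ∑ j ∈ range (n + 1), (d j : ℚ) * (-1 : ℚ) ^ j
      * (((X + 1) ^ (n - j) * (X - 1) ^ j : ℚ[X]).coeff (n - i)) = 0 := by
    intro i hi
    have h0 := habbv i hi
    rw [← Finset.sum_fiberwise_of_maps_to (t := range (n + 1)) (g := q)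
      (fun p _ => mem_range.mpr (Nat.lt_succ_of_le (hq p)))] at h0
    rw [← h0]
    refine Finset.sum_congr rfl fun j hj => ?_
    have hj' : j ≤ n := by simpa [Nat.lt_succ_iff] using mem_range.mp hj
    have hinner : ∀ p ∈ univ.filter (fun p => q p = j),
        (σ p : ℚ) * (-1 : ℚ) ^ (q p) *
          (Multiset.replicate (n - q p) (1 : ℚ) + Multiset.replicate (q p) (-1 : ℚ)).esymm i
        = (σ p : ℚ) * ((-1 : ℚ) ^ j
            * (((X + 1) ^ (n - j) * (X - 1) ^ j : ℚ[X]).coeff (n - i))) := by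
      intro p hp
      have hpj : q p = j := (Finset.mem_filter.mp hp).2
      rw [hpj, esymm_eq_coeff n j i hj' (le_of_lt hi)]
      ring
    rw [Finset.sum_congr rfl hinner, ← Finset.sum_mul, hfiber j]
    ring
  have hdchoose : ∀ j ≤ n, d j = d 0 * n.choose j := by
    intro j hj
    have := key_lemma n d habbv' j hj
    exact_mod_cast this
  -- decomposition of the multiset into fibers
  have hsplit : (Finset.univ.val.map fun p : P => (q p, σ p)) =
      ∑ j ∈ range (n + 1), (Multiset.replicate (Np j) ((j, 1) : ℕ × ℤ)
        + Multiset.replicate (Nm j) ((j, -1) : ℕ × ℤ)) := by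
    have base : ∀ s : Multiset P, s.map (fun p => (q p, σ p))
        = (s.map fun p => ({(q p, σ p)} : Multiset (ℕ × ℤ))).sum := by
      intro s
      induction s using Multiset.induction with
      | empty => simp
      | cons a s ih => simp [ih]
    rw [base]
    have : (Multiset.map (fun p => ({(q p, σ p)} : Multiset (ℕ × ℤ))) Finset.univ.val).sum
        = ∑ p : P, ({(q p, σ p)} : Multiset (ℕ × ℤ)) := rfl
    rw [this, ← Finset.sum_fiberwise_of_maps_to (t := range (n + 1)) (g := q)
      (fun p _ => mem_range.mpr (Nat.lt_succ_of_le (hq p)))]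
    refine Finset.sum_congr rfl fun j hj => ?_
    rw [← Finset.sum_filter_add_sum_filter_not (univ.filter (fun p => q p = j))
      (fun p => σ p = 1), Finset.filter_filter, Finset.filter_filter]
    have hfe : univ.filter (fun p => q p = j ∧ ¬ σ p = 1)
        = univ.filter (fun p => q p = j ∧ σ p = -1) := by
      apply Finset.filter_congr
      intro p _
      rcases hσ p with h | h <;> simp [h]
    rw [hfe]
    congr 1
    · rw [Finset.sum_congr rfl (fun p hp => by
        rw [(Finset.mem_filter.mp hp).2.1, (Finset.mem_filter.mp hp).2.2] :
          ∀ p ∈ univ.filter (fun p => q p = j ∧ σ p = 1),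
            ({(q p, σ p)} : Multiset (ℕ × ℤ)) = {(j, 1)})]
      rw [Finset.sum_const]
      rw [show ({((j : ℕ), (1 : ℤ))} : Multiset (ℕ × ℤ)) = Multiset.replicate 1 (j, 1) from rfl,
        Multiset.nsmul_replicate, mul_one]
    · rw [Finset.sum_congr rfl (fun p hp => by
        rw [(Finset.mem_filter.mp hp).2.1, (Finset.mem_filter.mp hp).2.2] :
          ∀ p ∈ univ.filter (fun p => q p = j ∧ σ p = -1),
            ({(q p, σ p)} : Multiset (ℕ × ℤ)) = {(j, -1)})]
      rw [Finset.sum_const]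
      rw [show ({((j : ℕ), (-1 : ℤ))} : Multiset (ℕ × ℤ)) = Multiset.replicate 1 (j, -1) from rfl,
        Multiset.nsmul_replicate, mul_one]
  -- RHS rearrangement
  have hrhs : ∀ (a b : ℕ) (c : ℕ → ℕ),
      a • sphereData n 1 + b • sphereData n (-1) + ∑ j ∈ range (n + 1), c j • pairData j
        = ∑ j ∈ range (n + 1), (Multiset.replicate (a * n.choose j + c j) ((j, 1) : ℕ × ℤ)
            + Multiset.replicate (b * n.choose j + c j) ((j, -1) : ℕ × ℤ)) := by
    intro a b c
    unfold sphereData pairData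
    rw [Finset.smul_sum, Finset.smul_sum, ← Finset.sum_add_distrib, ← Finset.sum_add_distrib]
    refine Finset.sum_congr rfl fun j _ => ?_
    rw [show ({((j : ℕ), (1 : ℤ)), (j, -1)} : Multiset (ℕ × ℤ))
        = Multiset.replicate 1 ((j, 1) : ℕ × ℤ) + Multiset.replicate 1 ((j, -1) : ℕ × ℤ) from rfl]
    rw [smul_add]
    simp only [Multiset.nsmul_replicate, mul_one, Multiset.replicate_add]
    abel
  rcases le_or_gt 0 (d 0) with hk | hk
  · refine ⟨(d 0).toNat, 0, Nm, ?_⟩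
    rw [hsplit, hrhs]
    refine Finset.sum_congr rfl fun j hj => ?_
    have hj' : j ≤ n := by simpa [Nat.lt_succ_iff] using mem_range.mp hj
    have h1 := hdchoose j hj'
    have h2 : Np j = (d 0).toNat * n.choose j + Nm j := by
      have h3 : ((d 0).toNat : ℤ) = d 0 := Int.toNat_of_nonneg hk
      have h4 : (Np j : ℤ) - Nm j = d 0 * n.choose j := h1
      zify
      rw [h3]
      linarith
    rw [h2, zero_mul, zero_add]
  · refine ⟨0, (-(d 0)).toNat, Np, ?_⟩
    rw [hsplit, hrhs]
    refine Finset.sum_congr rfl fun j hj => ?_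
    have hj' : j ≤ n := by simpa [Nat.lt_succ_iff] using mem_range.mp hj
    have h1 := hdchoose j hj'
    have h2 : Nm j = (-(d 0)).toNat * n.choose j + Np j := by
      have h3 : ((-(d 0)).toNat : ℤ) = -(d 0) := Int.toNat_of_nonneg (by omega)
      have h4 : (Np j : ℤ) - Nm j = d 0 * n.choose j := h1
      zify
      rw [h3]
      linarith
    rw [h2, zero_mul, zero_add]
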